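/- For N ≥ 0 define the polynomial F_N(z) = z(z^{2^N} - 1)^2 / (4^N (z-1)^2). Then for every p ∈ (0,1] and every integer i ≥ 0, the limit lim_{N→∞} [ F_N^{(i)}(1-p) · p^{i-1} ] / [ F_N'(1-p) · i! ] = (i + 1 - p)/(2 - p) holds. -/

import Mathlib

open Filter Polynomial
open Finset Topology

private lemma iteratedDeriv_polyEval : ∀ (n : ℕ) (q : Polynomial ℂ) (z : ℂ),
    iteratedDeriv n (fun w => q.eval w) z = (derivative^[n] q).eval z := by
  intro n
  induction n with
  | zero => intro q z; simp
  | succ n ih =>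
    intro q z
    have hd : deriv (fun w => q.eval w) = fun w => (derivative q).eval w :=
      funext fun w => q.deriv
    rw [iteratedDeriv_succ', hd, ih, Function.iterate_succ_apply]

private lemma iterate_derivative_finset_sum {ι : Type*} (s : Finset ι)
    (f : ι → Polynomial ℂ) (k : ℕ) :
    derivative^[k] (∑ a ∈ s, f a) = ∑ a ∈ s, derivative^[k] (f a) := by
  induction k with
  | zero => simp
  | succ k ih =>
    rw [Function.iterate_succ_apply', ih, derivative_sum]
    exact Finset.sum_congr rfl fun a _ => (Function.iterate_succ_apply' _ _ _).symm

/-- The double-sum expression for the evaluated iterated derivative. -/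
noncomputable def SS (x : ℂ) (i m : ℕ) : ℂ :=
  ∑ q ∈ Finset.range m ×ˢ Finset.range m,
    ((q.1 + q.2 + 1).descFactorial i : ℂ) * x ^ (q.1 + q.2 + 1 - i)

private lemma eval_iterate_derivative_eq_SS (x : ℂ) (i m : ℕ) :
    ((derivative^[i] ((X : Polynomial ℂ) * (∑ k ∈ Finset.range m, X ^ k) ^ 2)).eval x) =
      SS x i m := by
  have hpoly : (X : Polynomial ℂ) * (∑ k ∈ Finset.range m, X ^ k) ^ 2 =
      ∑ q ∈ Finset.range m ×ˢ Finset.range m, (X : Polynomial ℂ) ^ (q.1 + q.2 + 1) := by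
    rw [sq, Finset.sum_mul_sum, Finset.mul_sum]
    rw [Finset.sum_product]
    refine Finset.sum_congr rfl fun j _ => ?_
    rw [Finset.mul_sum]
    refine Finset.sum_congr rfl fun k _ => ?_
    ring
  rw [hpoly, iterate_derivative_finset_sum, eval_finset_sum]
  refine Finset.sum_congr rfl fun q _ => ?_
  rw [Polynomial.iterate_derivative_X_pow_eq_C_mul, eval_mul, eval_C, eval_pow, eval_X]

private lemma natid (i n : ℕ) : (n + i + 1) * (n + i + 1).descFactorial i
    = i.factorial * ((i + 1) * (n + i + 1).choose (i + 1) + i * (n + i + 1).choose i) := by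
  rw [Nat.descFactorial_eq_factorial_mul_choose]
  have h := Nat.choose_succ_right_eq (n + i + 1) i
  have h2 : n + i + 1 - i = n + 1 := by omega
  rw [h2] at h
  have key : (n + i + 1) * (n + i + 1).choose i
      = (i + 1) * (n + i + 1).choose (i + 1) + i * (n + i + 1).choose i := by
    rw [mul_comm (i + 1) ((n + i + 1).choose (i + 1)), h]
    ring
  calc (n + i + 1) * (i.factorial * (n + i + 1).choose i)
      = i.factorial * ((n + i + 1) * (n + i + 1).choose i) := by ring
    _ = _ := by rw [key]

private lemma hasSum_c (x : ℂ) (hx : ‖x‖ < 1) (i : ℕ) :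
    HasSum (fun n : ℕ => ((n + 1 : ℕ) : ℂ) * ((n + 1).descFactorial i : ℂ) * x ^ (n + 1 - i))
      ((i.factorial : ℂ) * ((i + 1) * x / (1 - x) ^ (i + 2) + i / (1 - x) ^ (i + 1))) := by
  set c : ℕ → ℂ := fun n => ((n + 1 : ℕ) : ℂ) * ((n + 1).descFactorial i : ℂ) * x ^ (n + 1 - i)
    with hc
  have h1 : HasSum (fun n : ℕ => (((n + (i + 1)).choose (i + 1) : ℕ) : ℂ) * x ^ n)
      (1 / (1 - x) ^ (i + 2)) := by
    simpa using hasSum_choose_mul_geometric_of_norm_lt_one (i + 1) hx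
  have h2 : HasSum (fun n : ℕ => (((n + i).choose i : ℕ) : ℂ) * x ^ n)
      (1 / (1 - x) ^ (i + 1)) :=
    hasSum_choose_mul_geometric_of_norm_lt_one i hx
  have h2' : HasSum (fun n : ℕ => (((n + 1 + i).choose i : ℕ) : ℂ) * x ^ (n + 1))
      (1 / (1 - x) ^ (i + 1) - 1) := by
    refine (hasSum_nat_add_iff (f := fun n : ℕ => (((n + i).choose i : ℕ) : ℂ) * x ^ n) 1).mpr ?_
    convert h2 using 1
    case e'_3 => rfl
    simp [Nat.choose_self]
  have hA := (h1.mul_left x).mul_left ((i.factorial : ℂ) * (i + 1))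
  have hB := h2'.mul_left ((i.factorial : ℂ) * i)
  have hAB := hA.add hB
  have hshift : HasSum (fun n : ℕ => c (n + i))
      ((i.factorial : ℂ) * (i + 1) * (x * (1 / (1 - x) ^ (i + 2)))
        + (i.factorial : ℂ) * i * (1 / (1 - x) ^ (i + 1) - 1)) := by
    refine hAB.congr_fun fun n => ?_
    have he : n + i + 1 - i = n + 1 := by omega
    have e1 : n + (i + 1) = n + i + 1 := by omega
    have e2 : n + 1 + i = n + i + 1 := by omega
    have hidC : ((n + i + 1 : ℕ) : ℂ) * ((n + i + 1).descFactorial i : ℂ)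
        = (i.factorial : ℂ) * (((i : ℂ) + 1) * ((n + i + 1).choose (i + 1) : ℂ)
            + (i : ℂ) * ((n + i + 1).choose i : ℂ)) := by
      exact_mod_cast congrArg (Nat.cast : ℕ → ℂ) (natid i n)
    simp only [hc]
    rw [he, e1, e2]
    push_cast at hidC ⊢
    linear_combination (x ^ (n + 1)) * hidC
  have hfin : ∑ n ∈ Finset.range i, c n = (i : ℂ) * (i.factorial : ℂ) := by
    cases i with
    | zero => simp
    | succ j =>
      rw [Finset.sum_eq_single_of_mem j (Finset.self_mem_range_succ j)]
      · simp only [hc, Nat.descFactorial_self, Nat.sub_self, pow_zero, mul_one]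
      · intro n hn hne
        have hlt : n + 1 < j + 1 := by
          simp only [Finset.mem_range] at hn; omega
        simp only [hc]
        rw [Nat.descFactorial_eq_zero_iff_lt.mpr hlt]
        simp
  have := (hasSum_nat_add_iff (f := c) i).mp hshift
  rw [hfin] at this
  convert this using 1
  case e'_3 => rfl
  ring
open Topology in
private lemma tendsto_SS (x : ℂ) (hx : ‖x‖ < 1) (i : ℕ) :
    Tendsto (fun m => SS x i m) atTop
      (𝓝 ((i.factorial : ℂ) * ((i + 1) * x / (1 - x) ^ (i + 2) + i / (1 - x) ^ (i + 1)))) := by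
  set T : ℂ := (i.factorial : ℂ) * ((i + 1) * x / (1 - x) ^ (i + 2) + i / (1 - x) ^ (i + 1))
    with hT
  set tt : ℕ × ℕ → ℂ :=
    fun q => ((q.1 + q.2 + 1).descFactorial i : ℂ) * x ^ (q.1 + q.2 + 1 - i) with htt
  have hc := hasSum_c x hx i
  set Tri : ℕ → Finset (ℕ × ℕ) := fun M => (Finset.range M).biUnion Finset.HasAntidiagonal.antidiagonal
    with hTri
  have hdisj : ∀ M : ℕ, Set.PairwiseDisjoint (Finset.range M : Set ℕ) Finset.HasAntidiagonal.antidiagonal := by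
    intro M a _ b _ hab
    refine Finset.disjoint_left.mpr fun q hqa hqb => hab ?_
    rw [Finset.HasAntidiagonal.mem_antidiagonal] at hqa hqb
    omega
  have hrow : ∀ n : ℕ, ∑ q ∈ Finset.HasAntidiagonal.antidiagonal n, tt q
      = ((n + 1 : ℕ) : ℂ) * ((n + 1).descFactorial i : ℂ) * x ^ (n + 1 - i) := by
    intro n
    trans ∑ _q ∈ Finset.HasAntidiagonal.antidiagonal n, ((n + 1).descFactorial i : ℂ) * x ^ (n + 1 - i)
    · refine Finset.sum_congr rfl fun q hq => ?_
      rw [Finset.HasAntidiagonal.mem_antidiagonal] at hq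
      simp only [htt]
      rw [hq]
    · rw [Finset.sum_const, Finset.Nat.card_antidiagonal, nsmul_eq_mul]
      push_cast
      ring
  have hrowR : ∀ n : ℕ, ∑ q ∈ Finset.HasAntidiagonal.antidiagonal n, ‖tt q‖
      = ((n + 1 : ℕ) : ℝ) * (((n + 1).descFactorial i : ℝ) * ‖x‖ ^ (n + 1 - i)) := by
    intro n
    trans ∑ _q ∈ Finset.HasAntidiagonal.antidiagonal n, ((n + 1).descFactorial i : ℝ) * ‖x‖ ^ (n + 1 - i)
    · refine Finset.sum_congr rfl fun q hq => ?_
      rw [Finset.HasAntidiagonal.mem_antidiagonal] at hq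
      simp only [htt]
      rw [hq, norm_mul, norm_pow, Complex.norm_natCast]
    · rw [Finset.sum_const, Finset.Nat.card_antidiagonal, nsmul_eq_mul]
  have htri_sum : ∀ (M : ℕ),
      ∑ q ∈ Tri M, tt q = ∑ n ∈ Finset.range M, ∑ q ∈ Finset.HasAntidiagonal.antidiagonal n, tt q :=
    fun M => Finset.sum_biUnion (hdisj M)
  have htri_sumR : ∀ (M : ℕ),
      ∑ q ∈ Tri M, ‖tt q‖ = ∑ n ∈ Finset.range M, ∑ q ∈ Finset.HasAntidiagonal.antidiagonal n, ‖tt q‖ :=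
    fun M => Finset.sum_biUnion (hdisj M)
  have hcnorm : Summable (fun n : ℕ =>
      ((n + 1 : ℕ) : ℝ) * (((n + 1).descFactorial i : ℝ) * ‖x‖ ^ (n + 1 - i))) := by
    have h := summable_norm_iff.mpr hc.summable
    refine h.congr fun n => ?_
    simp only [norm_mul, norm_pow, Complex.norm_natCast]
    ring
  have hsummable_norm : Summable (fun q : ℕ × ℕ => ‖tt q‖) := by
    refine summable_of_sum_le (c := ∑' n, ((n + 1 : ℕ) : ℝ) * (((n + 1).descFactorial i : ℝ) * ‖x‖ ^ (n + 1 - i))) (fun q => norm_nonneg _) fun u => ?_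
    set M : ℕ := (u.sup fun q => q.1 + q.2) + 1 with hM
    have hsub : u ⊆ Tri M := by
      intro q hq
      refine Finset.mem_biUnion.mpr ⟨q.1 + q.2, ?_, ?_⟩
      · exact Finset.mem_range.mpr (Nat.lt_succ_of_le (Finset.le_sup (f := fun q : ℕ × ℕ => q.1 + q.2) hq))
      · rw [Finset.HasAntidiagonal.mem_antidiagonal]
    calc ∑ q ∈ u, ‖tt q‖ ≤ ∑ q ∈ Tri M, ‖tt q‖ :=
          Finset.sum_le_sum_of_subset_of_nonneg hsub fun q _ _ => norm_nonneg _
      _ = ∑ n ∈ Finset.range M,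
            ((n + 1 : ℕ) : ℝ) * (((n + 1).descFactorial i : ℝ) * ‖x‖ ^ (n + 1 - i)) := by
          rw [htri_sumR M]
          exact Finset.sum_congr rfl fun n _ => hrowR n
      _ ≤ ∑' n, ((n + 1 : ℕ) : ℝ) * (((n + 1).descFactorial i : ℝ) * ‖x‖ ^ (n + 1 - i)) :=
          Summable.sum_le_tsum _ (fun n _ => by positivity) hcnorm
  have hsummable : Summable tt := Summable.of_norm hsummable_norm
  have hTriMono : Monotone Tri := fun a b hab =>
    Finset.biUnion_subset_biUnion_of_subset_left _ (Finset.range_subset_range.mpr hab)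
  have hTriTend : Tendsto Tri atTop atTop :=
    tendsto_atTop_finset_of_monotone hTriMono fun q =>
      ⟨q.1 + q.2 + 1, Finset.mem_biUnion.mpr ⟨q.1 + q.2, Finset.self_mem_range_succ _,
        Finset.HasAntidiagonal.mem_antidiagonal.mpr rfl⟩⟩
  have h1 : Tendsto (fun M => ∑ q ∈ Tri M, tt q) atTop (𝓝 (∑' q, tt q)) :=
    hsummable.hasSum.comp hTriTend
  have h2 : Tendsto (fun M => ∑ q ∈ Tri M, tt q) atTop (𝓝 T) := by
    have he : (fun M => ∑ q ∈ Tri M, tt q)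
        = fun M => ∑ n ∈ Finset.range M,
            ((n + 1 : ℕ) : ℂ) * ((n + 1).descFactorial i : ℂ) * x ^ (n + 1 - i) := by
      funext M
      rw [htri_sum M]
      exact Finset.sum_congr rfl fun n _ => hrow n
    rw [he]
    exact hc.tendsto_sum_nat
  have htsum : ∑' q, tt q = T := tendsto_nhds_unique h1 h2
  have hhs : HasSum tt T := htsum ▸ hsummable.hasSum
  have hSqTend : Tendsto (fun m => Finset.range m ×ˢ Finset.range m) atTop atTop :=
    tendsto_atTop_finset_of_monotone
      (fun a b hab => Finset.product_subset_product
        (Finset.range_subset_range.mpr hab) (Finset.range_subset_range.mpr hab))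
      fun q => ⟨max q.1 q.2 + 1, Finset.mem_product.mpr
        ⟨Finset.mem_range.mpr (Nat.lt_succ_of_le (le_max_left _ _)),
         Finset.mem_range.mpr (Nat.lt_succ_of_le (le_max_right _ _))⟩⟩
  exact hhs.comp hSqTend
private lemma F_eq (F : ℕ → Polynomial ℂ)
    (hF : ∀ N : ℕ, ∀ z : ℂ, z ≠ 1 →
      (F N).eval z = z * (z ^ (2 ^ N) - 1) ^ 2 / ((4 : ℂ) ^ N * (z - 1) ^ 2)) (N : ℕ) :
    F N = C (((4 : ℂ) ^ N)⁻¹) * (X * (∑ k ∈ Finset.range (2 ^ N), X ^ k) ^ 2) := by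
  apply Polynomial.eq_of_infinite_eval_eq
  have hinf : ({(1 : ℂ)}ᶜ : Set ℂ).Infinite := (Set.finite_singleton 1).infinite_compl
  refine hinf.mono fun z hz => ?_
  have hz1 : z ≠ 1 := hz
  have h1 : z - 1 ≠ 0 := sub_ne_zero.mpr hz1
  have h4 : ((4 : ℂ)) ^ N ≠ 0 := pow_ne_zero _ (by norm_num)
  simp only [Set.mem_setOf_eq]
  rw [hF N z hz1]
  simp only [eval_mul, eval_C, eval_pow, eval_X, eval_finset_sum]
  rw [geom_sum_eq hz1]
  field_simp

/-- let `F_N` be the polynomial with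
`F_N(z) = z(z^{2^N}-1)²/(4^N (z-1)²)` for `z ≠ 1`. Then for every `p ∈ (0,1]` and `i ≥ 0`,
`F_N^{(i)}(1-p) p^{i-1} / (F_N'(1-p) i!) → (i+1-p)/(2-p)` as `N → ∞`. -/
theorem stmt8 (F : ℕ → Polynomial ℂ)
    (hF : ∀ N : ℕ, ∀ z : ℂ, z ≠ 1 →
      (F N).eval z = z * (z ^ (2 ^ N) - 1) ^ 2 / ((4 : ℂ) ^ N * (z - 1) ^ 2))
    (p : ℝ) (hp : p ∈ Set.Ioc (0 : ℝ) 1) (i : ℕ) :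
    Tendsto
      (fun N : ℕ =>
        iteratedDeriv i (fun w => (F N).eval w) ((1 : ℂ) - p) * (p : ℂ) ^ ((i : ℤ) - 1) /
          (deriv (fun w => (F N).eval w) ((1 : ℂ) - p) * (i.factorial : ℂ)))
      atTop (nhds (((i : ℂ) + 1 - (p : ℂ)) / (2 - (p : ℂ)))) := by
  obtain ⟨hp0, hp1⟩ := hp
  set x : ℂ := 1 - (p : ℂ) with hxdef
  have hpC : (p : ℂ) ≠ 0 := Complex.ofReal_ne_zero.mpr (ne_of_gt hp0)
  have h1x : (1 : ℂ) - x = (p : ℂ) := by rw [hxdef]; ring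
  have hx : ‖x‖ < 1 := by
    have hxr : x = ((1 - p : ℝ) : ℂ) := by rw [hxdef]; push_cast; ring
    rw [hxr, Complex.norm_real, Real.norm_eq_abs, abs_of_nonneg (by linarith)]
    linarith
  have h2p : (2 : ℂ) - (p : ℂ) ≠ 0 := by
    have h : (2 : ℂ) - (p : ℂ) = ((2 - p : ℝ) : ℂ) := by push_cast; ring
    rw [h]
    exact Complex.ofReal_ne_zero.mpr (by linarith)
  have hfac : (i.factorial : ℂ) ≠ 0 := Nat.cast_ne_zero.mpr i.factorial_ne_zero
  have h4 : ∀ N : ℕ, ((4 : ℂ) ^ N)⁻¹ ≠ 0 := fun N => inv_ne_zero (pow_ne_zero _ (by norm_num))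
  have hnum : ∀ N : ℕ, iteratedDeriv i (fun w => (F N).eval w) x
      = ((4 : ℂ) ^ N)⁻¹ * SS x i (2 ^ N) := by
    intro N
    rw [iteratedDeriv_polyEval, F_eq F hF N, Polynomial.iterate_derivative_C_mul, eval_mul,
      eval_C, eval_iterate_derivative_eq_SS]
  have hden : ∀ N : ℕ, deriv (fun w => (F N).eval w) x
      = ((4 : ℂ) ^ N)⁻¹ * SS x 1 (2 ^ N) := by
    intro N
    rw [(F N).deriv, F_eq F hF N, Polynomial.derivative_C_mul, eval_mul, eval_C]
    congr 1
    rw [← eval_iterate_derivative_eq_SS x 1, Function.iterate_one]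
  have hfun : (fun N : ℕ =>
        iteratedDeriv i (fun w => (F N).eval w) x * (p : ℂ) ^ ((i : ℤ) - 1) /
          (deriv (fun w => (F N).eval w) x * (i.factorial : ℂ)))
      = fun N : ℕ => (SS x i (2 ^ N) * (p : ℂ) ^ ((i : ℤ) - 1)) /
          (SS x 1 (2 ^ N) * (i.factorial : ℂ)) := by
    funext N
    rw [hnum N, hden N, mul_assoc, mul_assoc, mul_div_mul_left _ _ (h4 N)]
  rw [hfun]
  have h2pow : Tendsto (fun N : ℕ => 2 ^ N) atTop atTop :=
    tendsto_atTop_mono (fun N => (Nat.lt_two_pow_self (n := N)).le) tendsto_id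
  have hNum := (tendsto_SS x hx i).comp h2pow
  have hDen := (tendsto_SS x hx 1).comp h2pow
  rw [h1x] at hNum hDen
  have hT1 : (Nat.factorial 1 : ℂ) * (((1 : ℕ) + 1) * x / ((p : ℂ)) ^ (1 + 2)
      + (1 : ℕ) / ((p : ℂ)) ^ (1 + 1)) = (2 - (p : ℂ)) / (p : ℂ) ^ 3 := by
    rw [hxdef]
    field_simp
    ring
  rw [hT1] at hDen
  have hT1ne : (2 - (p : ℂ)) / (p : ℂ) ^ 3 * (i.factorial : ℂ) ≠ 0 :=
    mul_ne_zero (div_ne_zero h2p (pow_ne_zero _ hpC)) hfac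
  have hdiv := Tendsto.div (hNum.mul_const ((p : ℂ) ^ ((i : ℤ) - 1)))
    (hDen.mul_const ((i.factorial : ℂ))) hT1ne
  have hval : ((i.factorial : ℂ) * (((i : ℕ) + 1) * x / ((p : ℂ)) ^ (i + 2)
        + (i : ℕ) / ((p : ℂ)) ^ (i + 1)) * (p : ℂ) ^ ((i : ℤ) - 1)) /
      ((2 - (p : ℂ)) / (p : ℂ) ^ 3 * (i.factorial : ℂ))
      = ((i : ℂ) + 1 - (p : ℂ)) / (2 - (p : ℂ)) := by
    have hz : (p : ℂ) ^ ((i : ℤ) - 1) = (p : ℂ) ^ (i : ℕ) / (p : ℂ) := by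
      rw [zpow_sub₀ hpC, zpow_natCast, zpow_one]
    rw [hz, hxdef]
    field_simp [hpC, h2p, hfac]
    ring
  rw [← hval]
  exact hdiv
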